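/- Let (G, p) be a finite critical net in ℝ^k satisfying the balance condition. Let v ∈ EuclideanSpace ℝ (Fin k) and λ ∈ ℝ be such that ⟪p x, v⟫ ≠ λ for every vertex x. Then the current through the hyperplane {⟪·, v⟫ = λ} equals the sum of the leaf currents on the upper side: ∑_{edges {x,y} of G with ⟪p x, v⟫ < λ < ⟪p y, v⟫} ⟪(p y − p x)/‖p y − p x‖, v⟫ = ∑_{l ∈ ∂X with ⟪p l, v⟫ > λ} ⟪u_l, v⟫. -/

import Mathlib

open scoped RealInnerProductSpace

lemma adjSum_swap {V : Type*} [Fintype V] [DecidableEq V]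
    (G : SimpleGraph V) [DecidableRel G.Adj] (g : V → V → ℝ) :
    ∑ x : V, ∑ y ∈ G.neighborFinset x, g x y
      = ∑ x : V, ∑ y ∈ G.neighborFinset x, g y x := by
  have key : ∀ h : V → V → ℝ,
      ∑ x : V, ∑ y ∈ G.neighborFinset x, h x y
        = ∑ x : V, ∑ y : V, if G.Adj x y then h x y else 0 := by
    intro h
    refine Finset.sum_congr rfl fun x _ => ?_
    rw [SimpleGraph.neighborFinset_eq_filter, Finset.sum_filter]
  rw [key, key, Finset.sum_comm]
  refine Finset.sum_congr rfl fun x _ => Finset.sum_congr rfl fun y _ => ?_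
  exact if_congr (G.adj_comm x y).symm rfl rfl

lemma cut_abstract {V : Type*} [Fintype V] [DecidableEq V]
    (G : SimpleGraph V) [DecidableRel G.Adj]
    (f : V → V → ℝ) (hanti : ∀ x y : V, f y x = - f x y)
    (up : V → Prop) [DecidablePred up] :
    ∑ x : V, ∑ y ∈ G.neighborFinset x, (if ¬ up x ∧ up y then f y x else 0)
      = ∑ x : V, if up x then ∑ y ∈ G.neighborFinset x, f x y else 0 := by
  have hswap := adjSum_swap G (fun x y => if ¬ up x ∧ up y then f y x else 0)
  have hT : ∑ x : V, ∑ y ∈ G.neighborFinset x, (if up x ∧ up y then f x y else 0) = 0 := by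
    have h2 := adjSum_swap G (fun x y => if up x ∧ up y then f x y else 0)
    have h3 : ∑ x : V, ∑ y ∈ G.neighborFinset x, (if up y ∧ up x then f y x else 0)
        = - ∑ x : V, ∑ y ∈ G.neighborFinset x, (if up x ∧ up y then f x y else 0) := by
      rw [← Finset.sum_neg_distrib]
      refine Finset.sum_congr rfl fun x _ => ?_
      rw [← Finset.sum_neg_distrib]
      refine Finset.sum_congr rfl fun y _ => ?_
      by_cases h : up x ∧ up y
      · simp [h.1, h.2, hanti x y]
      · have h' : ¬ (up y ∧ up x) := fun hc => h ⟨hc.2, hc.1⟩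
        simp [h, h']
    linarith [h2.trans h3]
  rw [hswap]
  calc ∑ x : V, ∑ y ∈ G.neighborFinset x, (if ¬ up y ∧ up x then f x y else 0)
      = ∑ x : V, ∑ y ∈ G.neighborFinset x,
          ((if up x then f x y else 0) - (if up x ∧ up y then f x y else 0)) := by
        refine Finset.sum_congr rfl fun x _ => Finset.sum_congr rfl fun y _ => ?_
        by_cases hx : up x <;> by_cases hy : up y <;> simp [hx, hy]
    _ = (∑ x : V, ∑ y ∈ G.neighborFinset x, (if up x then f x y else 0))
        - ∑ x : V, ∑ y ∈ G.neighborFinset x, (if up x ∧ up y then f x y else 0) := by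
        rw [← Finset.sum_sub_distrib]
        exact Finset.sum_congr rfl fun x _ => Finset.sum_sub_distrib _ _
    _ = ∑ x : V, if up x then ∑ y ∈ G.neighborFinset x, f x y else 0 := by
        rw [hT, sub_zero]
        exact Finset.sum_congr rfl fun x _ => by by_cases h : up x <;> simp [h]

/-- In a finite critical net in `ℝ^k` satisfying the balance
condition, for a direction `v` and a level `lam` avoided by all vertices, the current
through the hyperplane `{⟪·, v⟫ = lam}` (each crossing edge being counted once, with
the orientation `x → y` going upward) equals the sum of the leaf currents on the upper
side of the hyperplane. -/
theorem current_through_cut_eq_sum_upper_leaf_currents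
    {k : ℕ} (hk : 1 ≤ k) {V : Type*} [Fintype V] [DecidableEq V]
    (G : SimpleGraph V) [DecidableRel G.Adj]
    (p : V → EuclideanSpace ℝ (Fin k)) (hinj : Function.Injective p)
    (hdeg1 : ∀ x : V, 1 ≤ G.degree x)
    (hnoLL : ∀ x y : V, G.Adj x y → ¬(G.degree x = 1 ∧ G.degree y = 1))
    (hbal : ∀ x : V, 2 ≤ G.degree x →
      ∑ y ∈ G.neighborFinset x, (‖p x - p y‖)⁻¹ • (p x - p y) = 0)
    (n : V → V) (hn : ∀ l : V, G.degree l = 1 → G.Adj l (n l))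
    (v : EuclideanSpace ℝ (Fin k)) (lam : ℝ)
    (hlam : ∀ x : V, ⟪p x, v⟫ ≠ lam) :
    ∑ x : V, ∑ y ∈ G.neighborFinset x,
        (if ⟪p x, v⟫ < lam ∧ lam < ⟪p y, v⟫
          then ⟪(‖p y - p x‖)⁻¹ • (p y - p x), v⟫ else 0)
      = ∑ l ∈ (Finset.univ.filter fun l : V => G.degree l = 1).filter
          (fun l => lam < ⟪p l, v⟫),
          ⟪(‖p l - p (n l)‖)⁻¹ • (p l - p (n l)), v⟫ := by
  have hdown : ∀ x : V, (⟪p x, v⟫ < lam) ↔ ¬ lam < ⟪p x, v⟫ :=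
    fun x => ⟨fun h => not_lt.mpr h.le, fun h => ((hlam x).lt_or_gt).resolve_right h⟩
  have hanti : ∀ x y : V,
      (⟪(‖p y - p x‖)⁻¹ • (p y - p x), v⟫ : ℝ)
        = - ⟪(‖p x - p y‖)⁻¹ • (p x - p y), v⟫ := by
    intro x y
    rw [real_inner_smul_left, real_inner_smul_left, norm_sub_rev (p y) (p x),
      ← neg_sub (p x) (p y), inner_neg_left]
    ring
  have key := cut_abstract G
    (fun x y => (⟪(‖p x - p y‖)⁻¹ • (p x - p y), v⟫ : ℝ)) hanti
    (fun x => lam < ⟪p x, v⟫)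
  calc ∑ x : V, ∑ y ∈ G.neighborFinset x,
        (if ⟪p x, v⟫ < lam ∧ lam < ⟪p y, v⟫
          then ⟪(‖p y - p x‖)⁻¹ • (p y - p x), v⟫ else 0)
      = ∑ x : V, ∑ y ∈ G.neighborFinset x,
          (if ¬ lam < ⟪p x, v⟫ ∧ lam < ⟪p y, v⟫
            then ⟪(‖p y - p x‖)⁻¹ • (p y - p x), v⟫ else 0) := by
        refine Finset.sum_congr rfl fun x _ => Finset.sum_congr rfl fun y _ => ?_
        exact if_congr (and_congr_left' (hdown x)) rfl rfl
    _ = ∑ x : V, if lam < ⟪p x, v⟫ then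
          ∑ y ∈ G.neighborFinset x, (⟪(‖p x - p y‖)⁻¹ • (p x - p y), v⟫ : ℝ) else 0 := key
    _ = ∑ x : V, (if G.degree x = 1 then
          (if lam < ⟪p x, v⟫ then ⟪(‖p x - p (n x)‖)⁻¹ • (p x - p (n x)), v⟫ else 0) else 0) := by
        refine Finset.sum_congr rfl fun x _ => ?_
        by_cases hd : G.degree x = 1
        · rw [if_pos hd]
          have hcard : (G.neighborFinset x).card = 1 := by
            rw [SimpleGraph.card_neighborFinset_eq_degree]; exact hd
          have hmem : n x ∈ G.neighborFinset x :=
            (SimpleGraph.mem_neighborFinset G x (n x)).mpr (hn x hd)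
          obtain ⟨a, ha⟩ := Finset.card_eq_one.mp hcard
          rw [ha, Finset.mem_singleton] at hmem
          have hNx : G.neighborFinset x = {n x} := by rw [ha, hmem]
          by_cases hu : lam < ⟪p x, v⟫ <;> simp [hu, hNx]
        · rw [if_neg hd]
          have h2 : 2 ≤ G.degree x := by have := hdeg1 x; omega
          have hz : ∑ y ∈ G.neighborFinset x,
              (⟪(‖p x - p y‖)⁻¹ • (p x - p y), v⟫ : ℝ) = 0 := by
            rw [← sum_inner, hbal x h2, inner_zero_left]
          by_cases hu : lam < ⟪p x, v⟫
          · rw [if_pos hu]; exact hz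
          · rw [if_neg hu]
    _ = ∑ l ∈ (Finset.univ.filter fun l : V => G.degree l = 1).filter
          (fun l => lam < ⟪p l, v⟫),
          ⟪(‖p l - p (n l)‖)⁻¹ • (p l - p (n l)), v⟫ := by
        rw [Finset.sum_filter, Finset.sum_filter]
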